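/- For every function φ : Primes → ℕ ∪ {ω}, the set H_φ = ∏_p p^{φ(p)} ℤ_p (with the convention p^ω ℤ_p = {0}) is a closed subgroup of ∏_p ℤ_p, and conversely every closed subgroup of the topological group ∏_p ℤ_p (product over all primes p of the additive p-adic integers) is of this form. -/
import Mathlib

instance (p : Nat.Primes) : Fact (Nat.Prime (p : ℕ)) := ⟨p.2⟩

lemma aux_dvd_iff_norm_le {p : ℕ} [hp : Fact p.Prime] (x : ℤ_[p]) (k : ℕ) :
    (p : ℤ_[p]) ^ k ∣ x ↔ ‖x‖ ≤ (p : ℝ) ^ (-k : ℤ) := by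
  rw [PadicInt.norm_le_pow_iff_mem_span_pow, Ideal.mem_span_singleton]

lemma aux_isClosed_dvd {p : ℕ} [hp : Fact p.Prime] (k : ℕ) :
    IsClosed {x : ℤ_[p] | (p : ℤ_[p]) ^ k ∣ x} := by
  have h : {x : ℤ_[p] | (p : ℤ_[p]) ^ k ∣ x} = {x : ℤ_[p] | ‖x‖ ≤ (p : ℝ) ^ (-k : ℤ)} := by
    ext x; exact aux_dvd_iff_norm_le x k
  rw [h]; exact isClosed_le (by continuity) continuous_const

lemma aux_tendsto {p : ℕ} [hp : Fact p.Prime] :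
    Filter.Tendsto (fun k : ℕ => (p : ℝ) ^ (-k : ℤ)) Filter.atTop (nhds 0) := by
  have h1 : (1 : ℝ) < p := by exact_mod_cast hp.1.one_lt
  have := tendsto_pow_atTop_nhds_zero_of_lt_one (le_of_lt (inv_pos.mpr (by linarith : (0:ℝ) < p)))
    (inv_lt_one_of_one_lt₀ h1)
  convert this using 2 with k
  rw [zpow_neg, zpow_natCast, inv_pow]

/-- Every closed additive subgroup of `ℤ_[p]` is `p^φ ℤ_p` for some `φ : ℕ∞`. -/
lemma aux_closed_subgroup {p : ℕ} [hp : Fact p.Prime] (S : AddSubgroup ℤ_[p])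
    (hS : IsClosed (S : Set ℤ_[p])) :
    ∃ φ : ℕ∞, (S : Set ℤ_[p]) = {x | ∀ k : ℕ, (k : ℕ∞) ≤ φ → (p : ℤ_[p]) ^ k ∣ x} := by
  have smul : ∀ (c : ℤ_[p]) {x : ℤ_[p]}, x ∈ S → c * x ∈ S := by
    intro c x hx
    have hcl : IsClosed {c : ℤ_[p] | c * x ∈ S} := hS.preimage (continuous_mul_right x)
    have hsub : Set.range (Int.cast : ℤ → ℤ_[p]) ⊆ {c : ℤ_[p] | c * x ∈ S} := by
      rintro _ ⟨n, rfl⟩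
      simpa [zsmul_eq_mul] using S.zsmul_mem hx n
    have := closure_minimal hsub hcl
    rw [PadicInt.denseRange_intCast.closure_eq] at this
    exact this (Set.mem_univ c)
  set I : Ideal ℤ_[p] :=
    { carrier := S
      add_mem' := fun ha hb => S.add_mem ha hb
      zero_mem' := S.zero_mem
      smul_mem' := fun c x hx => smul c hx } with hI
  by_cases hbot : I = ⊥
  · refine ⟨⊤, ?_⟩
    ext x
    simp only [Set.mem_setOf_eq, le_top, forall_true_left, forall_const]
    constructor
    · intro hx
      have : x ∈ I := hx
      rw [hbot] at this
      simp only [Ideal.mem_bot] at this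
      subst this
      intro k; exact dvd_zero _
    · intro hx
      have hx0 : x = 0 := by
        have hle : ∀ k : ℕ, ‖x‖ ≤ (p : ℝ) ^ (-k : ℤ) :=
          fun k => (aux_dvd_iff_norm_le x k).mp (hx k)
        have : ‖x‖ ≤ 0 := ge_of_tendsto' aux_tendsto hle
        simpa using le_antisymm this (norm_nonneg x)
      subst hx0; exact S.zero_mem
  · obtain ⟨n, hn⟩ := PadicInt.ideal_eq_span_pow_p hbot
    refine ⟨(n : ℕ∞), ?_⟩
    ext x
    simp only [Set.mem_setOf_eq, Nat.cast_le]
    constructor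
    · intro hx k hk
      have : x ∈ I := hx
      rw [hn, Ideal.mem_span_singleton] at this
      exact dvd_trans (pow_dvd_pow _ hk) this
    · intro hx
      have : x ∈ I := by
        rw [hn, Ideal.mem_span_singleton]
        exact hx n le_rfl
      exact this

theorem stmt_18 (H : AddSubgroup ((p : Nat.Primes) → ℤ_[(p : ℕ)])) :
    IsClosed (H : Set ((p : Nat.Primes) → ℤ_[(p : ℕ)])) ↔
      ∃ φ : Nat.Primes → ℕ∞,
        (H : Set ((p : Nat.Primes) → ℤ_[(p : ℕ)])) =
          {f | ∀ (p : Nat.Primes) (k : ℕ), (k : ℕ∞) ≤ φ p →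
            ((p : ℕ) : ℤ_[(p : ℕ)]) ^ k ∣ f p} := by
  constructor
  · intro hH
    set Sp : (p : Nat.Primes) → AddSubgroup ℤ_[(p : ℕ)] :=
      fun p => H.map (Pi.evalAddMonoidHom (fun p : Nat.Primes => ℤ_[(p : ℕ)]) p) with hSpdef
    have hSpc : ∀ p : Nat.Primes, IsClosed ((Sp p : Set ℤ_[(p : ℕ)])) := by
      intro p
      have hcomp : IsCompact (H : Set ((p : Nat.Primes) → ℤ_[(p : ℕ)])) := hH.isCompact
      have himg : IsCompact ((fun f : (p : Nat.Primes) → ℤ_[(p : ℕ)] => f p) ''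
          (H : Set ((p : Nat.Primes) → ℤ_[(p : ℕ)]))) := hcomp.image (continuous_apply p)
      have heq : (Sp p : Set ℤ_[(p : ℕ)]) = (fun f : (p : Nat.Primes) → ℤ_[(p : ℕ)] => f p) ''
          (H : Set ((p : Nat.Primes) → ℤ_[(p : ℕ)])) := rfl
      rw [heq]; exact himg.isClosed
    choose φ hφ using fun p => aux_closed_subgroup (Sp p) (hSpc p)
    refine ⟨φ, Set.Subset.antisymm ?_ ?_⟩
    · intro f hf p k hk
      have hfp : f p ∈ (Sp p : Set ℤ_[(p : ℕ)]) := ⟨f, hf, rfl⟩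
      rw [hφ p] at hfp
      exact hfp k hk
    · intro f hf
      have hmem : ∀ p : Nat.Primes, ∃ g, g ∈ H ∧ g p = f p := by
        intro p
        have : f p ∈ (Sp p : Set ℤ_[(p : ℕ)]) := by
          rw [hφ p]; exact fun k hk => hf p k hk
        obtain ⟨g, hg, hgp⟩ := this
        exact ⟨g, hg, hgp⟩
      choose g hgH hgp using hmem
      have : f ∈ closure (H : Set ((p : Nat.Primes) → ℤ_[(p : ℕ)])) := by
        rw [mem_closure_iff_nhds]
        intro U hU
        rw [nhds_pi, Filter.mem_pi] at hU
        obtain ⟨I, hIfin, t, ht, hsub⟩ := hU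
        have hkex : ∀ p : Nat.Primes, ∃ k : ℕ, ∀ y : ℤ_[(p : ℕ)],
            ((p : ℕ) : ℤ_[(p : ℕ)]) ^ k ∣ (y - f p) → y ∈ t p := by
          intro p
          obtain ⟨ε, hε, hball⟩ := Metric.mem_nhds_iff.mp (ht p)
          obtain ⟨k, hkε⟩ := (aux_tendsto (p := (p : ℕ)).eventually_lt_const hε).exists
          refine ⟨k, fun y hy => hball ?_⟩
          have hnorm := (aux_dvd_iff_norm_le _ k).mp hy
          rw [Metric.mem_ball, dist_eq_norm]
          exact lt_of_le_of_lt hnorm hkε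
        choose k hk using hkex
        set F : Finset Nat.Primes := hIfin.toFinset with hF
        set a : Nat.Primes → ℕ := fun p => ∏ q ∈ F.erase p, (q : ℕ) ^ (k q) with ha
        have hcop : ∀ p : Nat.Primes, IsCoprime ((a p : ℤ)) (((p : ℕ) : ℤ) ^ (k p)) := by
          intro p
          have hnat : Nat.Coprime (a p) ((p : ℕ) ^ (k p)) := by
            apply Nat.Coprime.prod_left
            intro q hq
            have hne : (q : ℕ) ≠ (p : ℕ) := by
              have := Finset.ne_of_mem_erase hq
              exact fun hc => this (Subtype.ext hc)
            exact Nat.Coprime.pow _ _ ((Nat.coprime_primes q.2 p.2).mpr hne)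
          have := Nat.isCoprime_iff_coprime.mpr hnat
          push_cast at this ⊢
          exact this
        choose u v huv using hcop
        set c : Nat.Primes → ℤ := fun p => u p * (a p : ℤ) with hc
        have hc1 : ∀ p : Nat.Primes, (((p : ℕ) : ℤ) ^ (k p)) ∣ (c p - 1) := by
          intro p
          refine ⟨-(v p), ?_⟩
          simp only [hc]
          linarith [huv p]
        have hc0 : ∀ p q : Nat.Primes, q ∈ F → q ≠ p → (((q : ℕ) : ℤ) ^ (k q)) ∣ c p := by
          intro p q hqF hqp
          have h1 : ((q : ℕ) ^ (k q) : ℕ) ∣ a p :=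
            Finset.dvd_prod_of_mem _ (Finset.mem_erase.mpr ⟨hqp, hqF⟩)
          have h2 : (((q : ℕ) : ℤ) ^ (k q)) ∣ (a p : ℤ) := by
            exact_mod_cast Int.natCast_dvd_natCast.mpr h1
          exact h2.mul_left _
        set h : (p : Nat.Primes) → ℤ_[(p : ℕ)] := ∑ p ∈ F, c p • g p with hh
        have hhH : h ∈ H := AddSubgroup.sum_mem H fun p _ => AddSubgroup.zsmul_mem H (hgH p) (c p)
        refine ⟨h, hsub ?_, hhH⟩
        intro p hpI
        have hpF : p ∈ F := hIfin.mem_toFinset.mpr hpI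
        apply hk p
        have happly : h p = ∑ q ∈ F, (c q : ℤ_[(p : ℕ)]) * g q p := by
          rw [hh, Finset.sum_apply]
          refine Finset.sum_congr rfl fun q _ => ?_
          rw [Pi.smul_apply, zsmul_eq_mul]
        have hsplit : h p - f p =
            (∑ q ∈ F.erase p, (c q : ℤ_[(p : ℕ)]) * g q p) +
              ((c p - 1 : ℤ) : ℤ_[(p : ℕ)]) * f p := by
          rw [happly, ← Finset.sum_erase_add F _ hpF, hgp p]
          push_cast
          ring
        rw [hsplit]
        have hpow : (((p : ℕ) : ℤ_[(p : ℕ)]) ^ (k p))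
            = (((((p : ℕ) : ℤ) ^ (k p)) : ℤ) : ℤ_[(p : ℕ)]) := by
          push_cast; ring
        apply dvd_add
        · refine Finset.dvd_sum fun q hq => ?_
          have hqp : q ≠ p := Finset.ne_of_mem_erase hq
          have hdvd := hc0 q p hpF (fun hcc => hqp hcc.symm)
          have hcast : (((p : ℕ) : ℤ_[(p : ℕ)]) ^ (k p)) ∣ ((c q : ℤ) : ℤ_[(p : ℕ)]) := by
            rw [hpow]
            exact_mod_cast (Int.castRingHom ℤ_[(p : ℕ)]).map_dvd hdvd
          exact hcast.mul_right _
        · have hcast : (((p : ℕ) : ℤ_[(p : ℕ)]) ^ (k p)) ∣ ((c p - 1 : ℤ) : ℤ_[(p : ℕ)]) := by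
            rw [hpow]
            exact_mod_cast (Int.castRingHom ℤ_[(p : ℕ)]).map_dvd (hc1 p)
          exact hcast.mul_right _
      rwa [hH.closure_eq] at this
  · rintro ⟨φ, hφ⟩
    rw [hφ]
    have heq : {f : (p : Nat.Primes) → ℤ_[(p : ℕ)] | ∀ (p : Nat.Primes) (k : ℕ),
        (k : ℕ∞) ≤ φ p → ((p : ℕ) : ℤ_[(p : ℕ)]) ^ k ∣ f p} =
        ⋂ (p : Nat.Primes), ⋂ (k : ℕ), ⋂ (_ : (k : ℕ∞) ≤ φ p),
          (fun f : (p : Nat.Primes) → ℤ_[(p : ℕ)] => f p) ⁻¹'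
            {x : ℤ_[(p : ℕ)] | ((p : ℕ) : ℤ_[(p : ℕ)]) ^ k ∣ x} := by
      ext f; simp [Set.mem_iInter]
    rw [heq]
    exact isClosed_iInter fun p => isClosed_iInter fun k => isClosed_iInter fun _ =>
      (aux_isClosed_dvd k).preimage (continuous_apply p)
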